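/- Let S ⊆ ℝ be measurable and let w, x ∈ ℝ^k with α(w,x;S) > 0. Then the variance of z ~ N(⟨w,x⟩,1,S) satisfies E[(z − E[z])²] ≥ α(w,x;S)² / 12. -/

import Mathlib

open MeasureTheory ProbabilityTheory Real
open scoped RealInnerProductSpace ENNReal

/-- The survival probability `α(μ; S) = N(μ,1)(S)`. -/
noncomputable def survival (μ : ℝ) (S : Set ℝ) : ℝ :=
  (gaussianReal μ 1 S).toReal

/-- The truncated Gaussian `N(μ,1,S)`, i.e. `N(μ,1)` conditioned on `S`. -/
noncomputable def truncGaussian (μ : ℝ) (S : Set ℝ) : Measure ℝ :=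
  (gaussianReal μ 1)[|S]

lemma gaussianPDFReal_le (μ : ℝ) (z : ℝ) :
    gaussianPDFReal μ 1 z ≤ (Real.sqrt (2 * π))⁻¹ := by
  rw [gaussianPDFReal]
  push_cast
  rw [mul_one]
  have h1 : Real.exp (-(z - μ) ^ 2 / (2 * 1)) ≤ 1 := by
    rw [Real.exp_le_one_iff]
    have : (0:ℝ) ≤ (z - μ) ^ 2 := sq_nonneg _
    nlinarith
  have h2 : (0:ℝ) ≤ (Real.sqrt (2 * π))⁻¹ := by positivity
  calc (Real.sqrt (2 * π))⁻¹ * Real.exp (-(z - μ) ^ 2 / (2 * 1))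
      ≤ (Real.sqrt (2 * π))⁻¹ * 1 := by
        exact mul_le_mul_of_nonneg_left h1 h2
    _ = (Real.sqrt (2 * π))⁻¹ := mul_one _

lemma integrable_sq_gaussian (μ m : ℝ) :
    Integrable (fun z => (z - m) ^ 2) (gaussianReal μ 1) := by
  rw [gaussianReal_of_var_ne_zero μ one_ne_zero,
    integrable_withDensity_iff (measurable_gaussianPDF μ 1)
      (ae_of_all _ fun x => ENNReal.ofReal_lt_top)]
  have hC : (0:ℝ) ≤ 8 + 2 * (μ - m) ^ 2 := by positivity
  apply Integrable.mono'
    (g := fun z => (8 + 2 * (μ - m) ^ 2) * Real.exp (-(4:ℝ)⁻¹ * (z - μ) ^ 2))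
  · exact ((integrable_exp_neg_mul_sq (by norm_num : (0:ℝ) < 4⁻¹)).comp_sub_right μ).const_mul _
  · exact (((measurable_id.sub_const m).pow_const 2).mul
      ((measurable_gaussianPDF μ 1).ennreal_toReal)).aestronglyMeasurable
  · refine ae_of_all _ fun z => ?_
    have hnn : 0 ≤ gaussianPDFReal μ 1 z := gaussianPDFReal_nonneg μ 1 z
    have htr : (gaussianPDF μ 1 z).toReal = gaussianPDFReal μ 1 z :=
      ENNReal.toReal_ofReal hnn
    rw [Real.norm_eq_abs, abs_of_nonneg (by positivity), htr]
    -- pdf ≤ exp(-(z-μ)²/2)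
    have hsqrt : (1:ℝ) ≤ Real.sqrt (2 * π) := by
      rw [show (1:ℝ) = Real.sqrt 1 by simp]
      apply Real.sqrt_le_sqrt
      nlinarith [pi_gt_three]
    have hpdf : gaussianPDFReal μ 1 z ≤ Real.exp (-(z - μ) ^ 2 / 2) := by
      rw [gaussianPDFReal]
      push_cast
      rw [mul_one]
      have : (Real.sqrt (2 * π))⁻¹ ≤ 1 := by
        rw [inv_le_one_iff₀]; right; exact hsqrt
      calc (Real.sqrt (2 * π))⁻¹ * Real.exp (-(z - μ) ^ 2 / (2 * 1))
          ≤ 1 * Real.exp (-(z - μ) ^ 2 / (2 * 1)) :=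
            mul_le_mul_of_nonneg_right this (Real.exp_pos _).le
        _ = Real.exp (-(z - μ) ^ 2 / 2) := by rw [one_mul]; norm_num
    have hkey : (z - m) ^ 2 * Real.exp (-(z - μ) ^ 2 / 2)
        ≤ (8 + 2 * (μ - m) ^ 2) * Real.exp (-(4:ℝ)⁻¹ * (z - μ) ^ 2) := by
      set u := z - μ with hu
      have h1 : (z - m) ^ 2 ≤ 2 * u ^ 2 + 2 * (μ - m) ^ 2 := by
        have : z - m = u + (μ - m) := by rw [hu]; ring
        rw [this]
        nlinarith [sq_nonneg (u - (μ - m))]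
      have h2 : u ^ 2 ≤ 4 * Real.exp (u ^ 2 / 4) := by
        nlinarith [Real.add_one_le_exp (u ^ 2 / 4)]
      have h3 : (1:ℝ) ≤ Real.exp (u ^ 2 / 4) := by
        rw [Real.one_le_exp_iff]; positivity
      have hexp : Real.exp (-u ^ 2 / 2) = Real.exp (-(4:ℝ)⁻¹ * u ^ 2) * Real.exp (-(u ^ 2 / 4)) := by
        rw [← Real.exp_add]; ring_nf
      have h4 : (z - m) ^ 2 ≤ (8 + 2 * (μ - m) ^ 2) * Real.exp (u ^ 2 / 4) := by
        calc (z - m) ^ 2 ≤ 2 * u ^ 2 + 2 * (μ - m) ^ 2 := h1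
          _ ≤ 8 * Real.exp (u ^ 2 / 4) + 2 * (μ - m) ^ 2 * Real.exp (u ^ 2 / 4) := by
              nlinarith [sq_nonneg (μ - m)]
          _ = (8 + 2 * (μ - m) ^ 2) * Real.exp (u ^ 2 / 4) := by ring
      calc (z - m) ^ 2 * Real.exp (-u ^ 2 / 2)
          = (z - m) ^ 2 * Real.exp (-(u ^ 2 / 4)) * Real.exp (-(4:ℝ)⁻¹ * u ^ 2) := by
            rw [hexp]; ring
        _ ≤ (8 + 2 * (μ - m) ^ 2) * Real.exp (-(4:ℝ)⁻¹ * u ^ 2) := by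
            have hb : (z - m) ^ 2 * Real.exp (-(u ^ 2 / 4)) ≤ 8 + 2 * (μ - m) ^ 2 := by
              rw [Real.exp_neg]
              rw [mul_inv_le_iff₀ (Real.exp_pos _)]
              exact h4
            exact mul_le_mul_of_nonneg_right hb (Real.exp_pos _).le
    calc (z - m) ^ 2 * gaussianPDFReal μ 1 z
        ≤ (z - m) ^ 2 * Real.exp (-(z - μ) ^ 2 / 2) :=
          mul_le_mul_of_nonneg_left hpdf (sq_nonneg _)
      _ ≤ (8 + 2 * (μ - m) ^ 2) * Real.exp (-(4:ℝ)⁻¹ * (z - μ) ^ 2) := hkey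

lemma trunc_var_lower (μ : ℝ) (S : Set ℝ) (hS : MeasurableSet S)
    (h : 0 < survival μ S) :
    survival μ S ^ 2 / 12 ≤
      ∫ z, (z - ∫ z', z' ∂(truncGaussian μ S)) ^ 2 ∂(truncGaussian μ S) := by
  set α := survival μ S with hα
  set ν := truncGaussian μ S with hν
  set m := ∫ z', z' ∂ν with hm
  set t := Real.sqrt (2 * π) * α / 3 with ht
  have hsqrtpos : 0 < Real.sqrt (2 * π) := Real.sqrt_pos.mpr (by positivity)
  have htpos : 0 < t := by rw [ht]; positivity
  have hSne : gaussianReal μ 1 S ≠ 0 := by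
    intro h0
    rw [hα, survival, h0] at h
    simp at h
  have hStop : gaussianReal μ 1 S ≠ ⊤ := measure_ne_top _ _
  haveI hprob : IsProbabilityMeasure ν := by
    rw [hν, truncGaussian]
    exact cond_isProbabilityMeasure hSne
  -- the set far from the mean
  set A := {z : ℝ | t ≤ |z - m|} with hA
  have hAmeas : MeasurableSet A :=
    measurableSet_le measurable_const (measurable_id.sub_const m).abs
  have hAc : Aᶜ = Set.Ioo (m - t) (m + t) := by
    ext z
    simp only [hA, Set.mem_compl_iff, Set.mem_setOf_eq, not_le, Set.mem_Ioo, abs_lt]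
    constructor
    · rintro ⟨h1, h2⟩; constructor <;> linarith
    · rintro ⟨h1, h2⟩; constructor <;> linarith
  -- gaussian measure of the interval
  have hIoo : gaussianReal μ 1 (Set.Ioo (m - t) (m + t)) ≤ ENNReal.ofReal (2 * t / Real.sqrt (2 * π)) := by
    rw [gaussianReal_apply μ one_ne_zero]
    calc ∫⁻ x in Set.Ioo (m - t) (m + t), gaussianPDF μ 1 x
        ≤ ∫⁻ _ in Set.Ioo (m - t) (m + t), ENNReal.ofReal ((Real.sqrt (2 * π))⁻¹) := by
          apply setLIntegral_mono measurable_const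
          intro x _
          exact ENNReal.ofReal_le_ofReal (gaussianPDFReal_le μ x)
      _ = ENNReal.ofReal ((Real.sqrt (2 * π))⁻¹) * volume (Set.Ioo (m - t) (m + t)) := by
          rw [setLIntegral_const]
      _ = ENNReal.ofReal (2 * t / Real.sqrt (2 * π)) := by
          rw [Real.volume_Ioo, ← ENNReal.ofReal_mul (by positivity)]
          congr 1
          field_simp
          ring
  -- ν of the complement is at most 2/3
  have hνAc : (ν Aᶜ).toReal ≤ 2 / 3 := by
    have hcond : ν Aᶜ = (gaussianReal μ 1 S)⁻¹ * gaussianReal μ 1 (S ∩ Aᶜ) := by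
      rw [hν, truncGaussian]
      exact cond_apply hS _ _
    have hle : ν Aᶜ ≤ (gaussianReal μ 1 S)⁻¹ * ENNReal.ofReal (2 * t / Real.sqrt (2 * π)) := by
      rw [hcond]
      apply mul_le_mul_right
      calc gaussianReal μ 1 (S ∩ Aᶜ) ≤ gaussianReal μ 1 Aᶜ :=
            measure_mono Set.inter_subset_right
        _ ≤ ENNReal.ofReal (2 * t / Real.sqrt (2 * π)) := by rw [hAc]; exact hIoo
    have hfin : (gaussianReal μ 1 S)⁻¹ * ENNReal.ofReal (2 * t / Real.sqrt (2 * π)) ≠ ⊤ := by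
      apply ENNReal.mul_ne_top
      · exact ENNReal.inv_ne_top.mpr hSne
      · exact ENNReal.ofReal_ne_top
    calc (ν Aᶜ).toReal
        ≤ ((gaussianReal μ 1 S)⁻¹ * ENNReal.ofReal (2 * t / Real.sqrt (2 * π))).toReal :=
          ENNReal.toReal_mono hfin hle
      _ = α⁻¹ * (2 * t / Real.sqrt (2 * π)) := by
          rw [ENNReal.toReal_mul, ENNReal.toReal_inv, ENNReal.toReal_ofReal (by positivity)]
          rfl
      _ = 2 / 3 := by
          rw [ht]
          field_simp
  -- hence ν A ≥ 1/3
  have hsum : (ν A).toReal + (ν Aᶜ).toReal = 1 := by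
    have := prob_add_prob_compl (μ := ν) hAmeas
    have h2 : (ν A + ν Aᶜ).toReal = (1 : ℝ≥0∞).toReal := by rw [this]
    rwa [ENNReal.toReal_add (measure_ne_top _ _) (measure_ne_top _ _), ENNReal.toReal_one] at h2
  have hνA : (1:ℝ) / 3 ≤ (ν A).toReal := by linarith
  -- integrability of the squared deviation
  have hint : Integrable (fun z => (z - m) ^ 2) ν := by
    rw [hν, truncGaussian, ProbabilityTheory.cond]
    exact ((integrable_sq_gaussian μ m).restrict).smul_measure (ENNReal.inv_ne_top.mpr hSne)
  -- lower bound via indicator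
  have hind : Integrable (A.indicator fun _ => t ^ 2) ν :=
    (integrable_const _).indicator hAmeas
  have hmono : ∀ z, A.indicator (fun _ => t ^ 2) z ≤ (z - m) ^ 2 := by
    intro z
    by_cases hz : z ∈ A
    · rw [Set.indicator_of_mem hz]
      have hz' : t ≤ |z - m| := hz
      calc t ^ 2 ≤ |z - m| ^ 2 := by
            apply pow_le_pow_left₀ htpos.le hz'
        _ = (z - m) ^ 2 := sq_abs _
    · rw [Set.indicator_of_notMem hz]
      positivity
  have hlow : t ^ 2 * (ν A).toReal ≤ ∫ z, (z - m) ^ 2 ∂ν := by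
    calc t ^ 2 * (ν A).toReal = ∫ z, A.indicator (fun _ => t ^ 2) z ∂ν := by
          rw [integral_indicator_const _ hAmeas, smul_eq_mul, mul_comm]
          rfl
      _ ≤ ∫ z, (z - m) ^ 2 ∂ν := integral_mono hind hint hmono
  -- final numeric computation
  have ht2 : t ^ 2 = 2 * π * α ^ 2 / 9 := by
    rw [ht]
    rw [div_pow, mul_pow, Real.sq_sqrt (by positivity : (0:ℝ) ≤ 2 * π)]
    norm_num
  calc α ^ 2 / 12 ≤ t ^ 2 * (1 / 3) := by
        rw [ht2]
        nlinarith [pi_gt_three, sq_nonneg α]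
    _ ≤ t ^ 2 * (ν A).toReal := by
        apply mul_le_mul_of_nonneg_left hνA (by positivity)
    _ ≤ ∫ z, (z - m) ^ 2 ∂ν := hlow

theorem stmt2 {k : ℕ} (S : Set ℝ) (hS : MeasurableSet S)
    (w x : EuclideanSpace ℝ (Fin k)) (h : 0 < survival ⟪w, x⟫ S) :
    survival ⟪w, x⟫ S ^ 2 / 12 ≤
      ∫ z, (z - ∫ z', z' ∂(truncGaussian ⟪w, x⟫ S)) ^ 2 ∂(truncGaussian ⟪w, x⟫ S) := by
  exact trunc_var_lower ⟪w, x⟫ S hS h
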